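/- Let n ≥ 1, let p : Fin n → ℝ be a probability vector with p i > 0 for all i, let L : Fin n → ℝ, let f : ℝ → ℝ be convex with f 1 = 0, define D_f(q‖p) = Σ_i p i * f (q i / p i) for probability vectors q on Fin n, and let ε > 0 and κ > 0. Then sup { Σ_i q i * L i − κ · D_f(q‖p) : q a probability vector on Fin n with D_f(q‖p) ≤ ε } = inf over λ ≥ 0 of ( λ·ε + sup { Σ_i q i * L i − (λ+κ) · D_f(q‖p) : q a probability vector on Fin n } ), where the equality is in the extended reals. -/

import Mathlib

open Set in

lemma strong_dual_aux {α : Type*} {S T : α → Prop} {D g : α → ℝ} {p0 : α}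
    (hp0S : S p0) (hp0T : T p0) (hD0 : D p0 = 0)
    (hconv : ∀ q1, S q1 → T q1 → ∀ q2, S q2 → T q2 → ∀ a b : ℝ, 0 < a → 0 < b → a + b = 1 →
      ∃ q, S q ∧ T q ∧ D q ≤ a * D q1 + b * D q2 ∧ a * g q1 + b * g q2 ≤ g q)
    {B : ℝ} (hB : ∀ q, S q → T q → g q ≤ B)
    {ε : ℝ} (hε : 0 < ε) :
    sSup {x : EReal | ∃ q, S q ∧ T q ∧ D q ≤ ε ∧ x = ((g q : ℝ) : EReal)} =
    sInf {x : EReal | ∃ lam : ℝ, 0 ≤ lam ∧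
      x = ((lam * ε : ℝ) : EReal) +
        sSup {y : EReal | ∃ q, S q ∧ T q ∧ y = ((g q - lam * D q : ℝ) : EReal)}} := by
  classical
  set R : Set ℝ := {r : ℝ | ∃ q, S q ∧ T q ∧ D q ≤ ε ∧ r = g q} with hR
  have hRne : R.Nonempty := ⟨g p0, p0, hp0S, hp0T, by rw [hD0]; exact hε.le, rfl⟩
  have hRbdd : BddAbove R := ⟨B, by rintro r ⟨q, hqS, hqT, -, rfl⟩; exact hB q hqS hqT⟩
  set V : ℝ := sSup R with hV
  have hVub : ∀ q, S q → T q → D q ≤ ε → g q ≤ V :=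
    fun q h1 h2 h3 => le_csSup hRbdd ⟨q, h1, h2, h3, rfl⟩
  -- the LHS equals the coercion of V
  have hAV : sSup {x : EReal | ∃ q, S q ∧ T q ∧ D q ≤ ε ∧ x = ((g q : ℝ) : EReal)}
      = ((V : ℝ) : EReal) := by
    have himg : {x : EReal | ∃ q, S q ∧ T q ∧ D q ≤ ε ∧ x = ((g q : ℝ) : EReal)}
        = (fun r : ℝ => (r : EReal)) '' R := by
      ext x
      constructor
      · rintro ⟨q, h1, h2, h3, rfl⟩; exact ⟨g q, ⟨q, h1, h2, h3, rfl⟩, rfl⟩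
      · rintro ⟨r, ⟨q, h1, h2, h3, rfl⟩, rfl⟩; exact ⟨q, h1, h2, h3, rfl⟩
    rw [himg, ← Monotone.map_csSup_of_continuousAt
      (continuous_coe_real_ereal.continuousAt) EReal.coe_strictMono.monotone hRne hRbdd]
  rw [hAV]
  apply le_antisymm
  · -- weak duality
    apply le_sInf
    rintro x ⟨lam, hlam, rfl⟩
    -- find a feasible point realizing values close to V
    rw [← hAV]
    apply sSup_le
    rintro x ⟨q, h1, h2, h3, rfl⟩
    have hle : ((g q - lam * D q : ℝ) : EReal) ≤
        sSup {y : EReal | ∃ q, S q ∧ T q ∧ y = ((g q - lam * D q : ℝ) : EReal)} :=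
      le_sSup ⟨q, h1, h2, rfl⟩
    calc ((g q : ℝ) : EReal) ≤ ((lam * ε : ℝ) : EReal) + ((g q - lam * D q : ℝ) : EReal) := by
          rw [← EReal.coe_add]
          apply EReal.coe_le_coe_iff.mpr
          nlinarith [mul_le_mul_of_nonneg_left h3 hlam]
      _ ≤ _ := add_le_add_right hle _
  · -- strong duality via separation
    set C : Set (ℝ × ℝ) := ⋃ q : {q // S q ∧ T q}, Ioi (D q.1) ×ˢ Iio (g q.1) with hC
    have hmemC : ∀ q, S q → T q → ∀ u t : ℝ, D q < u → t < g q → (u, t) ∈ C := by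
      intro q h1 h2 u t hu ht
      exact mem_iUnion.mpr ⟨⟨q, h1, h2⟩, by simp [mem_prod, hu, ht]⟩
    have hCopen : IsOpen C := isOpen_iUnion fun q => isOpen_Ioi.prod isOpen_Iio
    have hCconv : Convex ℝ C := by
      rintro z1 hz1 z2 hz2 a b ha hb hab
      rcases eq_or_lt_of_le ha with rfl | ha'
      · simpa [(by linarith : b = 1)] using hz2
      rcases eq_or_lt_of_le hb with rfl | hb'
      · simpa [(by linarith : a = 1)] using hz1
      obtain ⟨⟨q1, hq1S, hq1T⟩, hu1, ht1⟩ := by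
        simpa only [hC, mem_iUnion, mem_prod, mem_Ioi, mem_Iio] using hz1
      obtain ⟨⟨q2, hq2S, hq2T⟩, hu2, ht2⟩ := by
        simpa only [hC, mem_iUnion, mem_prod, mem_Ioi, mem_Iio] using hz2
      obtain ⟨q, hqS, hqT, hD, hg⟩ := hconv q1 hq1S hq1T q2 hq2S hq2T a b ha' hb' hab
      apply hmemC q hqS hqT
      · calc D q ≤ a * D q1 + b * D q2 := hD
          _ < a * z1.1 + b * z2.1 := by
              exact add_lt_add (mul_lt_mul_of_pos_left hu1 ha') (mul_lt_mul_of_pos_left hu2 hb')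
      · calc a * z1.2 + b * z2.2 < a * g q1 + b * g q2 := by
              exact add_lt_add (mul_lt_mul_of_pos_left ht1 ha') (mul_lt_mul_of_pos_left ht2 hb')
          _ ≤ g q := hg
    have hnot : ((ε, V) : ℝ × ℝ) ∉ C := by
      intro h
      obtain ⟨⟨q, hqS, hqT⟩, hu, ht⟩ := by
        simpa only [hC, mem_iUnion, mem_prod, mem_Ioi, mem_Iio] using h
      exact absurd (hVub q hqS hqT hu.le) (not_le.mpr ht)
    obtain ⟨φ, hφ⟩ := geometric_hahn_banach_open_point hCconv hCopen hnot
    set a : ℝ := φ (1, 0) with hadef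
    set b : ℝ := φ (0, 1) with hbdef
    have hφeval : ∀ u t : ℝ, φ (u, t) = a * u + b * t := by
      intro u t
      have : ((u, t) : ℝ × ℝ) = u • ((1 : ℝ), (0 : ℝ)) + t • ((0 : ℝ), (1 : ℝ)) := by
        simp [Prod.ext_iff]
      rw [this, map_add, map_smul, map_smul, smul_eq_mul, smul_eq_mul, hadef, hbdef]
      ring
    have hφeval' : φ (ε, V) = a * ε + b * V := hφeval ε V
    have key : ∀ q, S q → T q → a * D q + b * g q ≤ a * ε + b * V := by
      intro q h1 h2
      apply le_of_forall_pos_le_add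
      intro δ hδ
      set s : ℝ := δ / (|a| + |b| + 1) with hs
      have hspos : 0 < s := div_pos hδ (by positivity)
      have hmem := hφ _ (hmemC q h1 h2 (D q + s) (g q - s) (by linarith) (by linarith))
      rw [hφeval, hφeval'] at hmem
      have h1' : s * (b - a) ≤ s * (|a| + |b|) := by
        apply mul_le_mul_of_nonneg_left _ hspos.le
        have := le_abs_self b
        have := neg_abs_le a
        linarith
      have h2' : s * (|a| + |b| + 1) = δ := div_mul_cancel₀ _ (by positivity)
      nlinarith
    have ha : a ≤ 0 := by
      by_contra h
      push_neg at h
      set m : ℝ := max 1 ((a * ε + b * V - b * (g p0 - 1)) / a) with hm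
      have hmem := hφ _ (hmemC p0 hp0S hp0T (D p0 + m) (g p0 - 1)
        (by have : (0:ℝ) < m := lt_of_lt_of_le one_pos (le_max_left _ _); linarith)
        (by linarith))
      rw [hφeval, hφeval'] at hmem
      have hm2 : (a * ε + b * V - b * (g p0 - 1)) / a ≤ m := le_max_right _ _
      rw [div_le_iff₀ h] at hm2
      rw [hD0] at hmem
      nlinarith
    have hb : 0 ≤ b := by
      by_contra h
      push_neg at h
      set m : ℝ := max 1 ((a * ε + b * V - a * (D p0 + 1) - b * g p0) / (-b)) with hm
      have hmem := hφ _ (hmemC p0 hp0S hp0T (D p0 + 1) (g p0 - m)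
        (by linarith)
        (by have : (0:ℝ) < m := lt_of_lt_of_le one_pos (le_max_left _ _); linarith))
      rw [hφeval, hφeval'] at hmem
      have hm2 : (a * ε + b * V - a * (D p0 + 1) - b * g p0) / (-b) ≤ m := le_max_right _ _
      rw [div_le_iff₀ (by linarith : (0:ℝ) < -b)] at hm2
      nlinarith
    have hbpos : 0 < b := by
      rcases hb.lt_or_eq with h | h
      · exact h
      · exfalso
        have hkey := key p0 hp0S hp0T
        rw [hD0, ← h] at hkey
        have ha0 : a = 0 := by nlinarith
        have hmem := hφ _ (hmemC p0 hp0S hp0T (D p0 + 1) (g p0 - 1) (by linarith) (by linarith))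
        rw [hφeval, hφeval', ha0, ← h] at hmem
        linarith
    set lam : ℝ := -(a / b) with hlam
    have hlamnn : 0 ≤ lam := by
      rw [hlam]
      have : a / b ≤ 0 := div_nonpos_of_nonpos_of_nonneg ha hbpos.le
      linarith
    have hba : b * lam = -a := by
      rw [hlam]
      field_simp
    have key2 : ∀ q, S q → T q → g q - lam * D q ≤ V - lam * ε := by
      intro q h1 h2
      have hk := key q h1 h2
      have hmul : b * (g q - lam * D q) ≤ b * (V - lam * ε) := by
        calc b * (g q - lam * D q) = b * g q - (b * lam) * D q := by ring
          _ = b * g q + a * D q := by rw [hba]; ring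
          _ ≤ b * V + a * ε := by linarith
          _ = b * V - (b * lam) * ε := by rw [hba]; ring
          _ = b * (V - lam * ε) := by ring
      exact le_of_mul_le_mul_left hmul hbpos
    have hmemInf : ((lam * ε : ℝ) : EReal) +
        sSup {y : EReal | ∃ q, S q ∧ T q ∧ y = ((g q - lam * D q : ℝ) : EReal)} ∈
        {x : EReal | ∃ lam : ℝ, 0 ≤ lam ∧
          x = ((lam * ε : ℝ) : EReal) +
            sSup {y : EReal | ∃ q, S q ∧ T q ∧ y = ((g q - lam * D q : ℝ) : EReal)}} :=
      ⟨lam, hlamnn, rfl⟩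
    refine le_trans (sInf_le hmemInf) ?_
    have hsup : sSup {y : EReal | ∃ q, S q ∧ T q ∧ y = ((g q - lam * D q : ℝ) : EReal)} ≤
        ((V - lam * ε : ℝ) : EReal) := by
      apply sSup_le
      rintro y ⟨q, h1, h2, rfl⟩
      exact_mod_cast key2 q h1 h2
    calc ((lam * ε : ℝ) : EReal) + sSup {y : EReal | ∃ q, S q ∧ T q ∧
          y = ((g q - lam * D q : ℝ) : EReal)}
        ≤ ((lam * ε : ℝ) : EReal) + ((V - lam * ε : ℝ) : EReal) := add_le_add_right hsup _
      _ = ((V : ℝ) : EReal) := by rw [← EReal.coe_add]; norm_num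


theorem f_dro_strong_duality (n : ℕ) (hn : 1 ≤ n) (p : Fin n → ℝ)
    (hp_pos : ∀ i, 0 < p i) (hp_sum : ∑ i, p i = 1)
    (L : Fin n → ℝ) (f : ℝ → ℝ) (hf : ConvexOn ℝ Set.univ f) (hf1 : f 1 = 0)
    (ε κ : ℝ) (hε : 0 < ε) (hκ : 0 < κ) :
    sSup {x : EReal | ∃ q : Fin n → ℝ, (∀ i, 0 ≤ q i) ∧ (∑ i, q i = 1) ∧
        (∑ i, p i * f (q i / p i)) ≤ ε ∧
        x = (((∑ i, q i * L i) - κ * (∑ i, p i * f (q i / p i)) : ℝ) : EReal)} =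
    sInf {x : EReal | ∃ lam : ℝ, 0 ≤ lam ∧
        x = ((lam * ε : ℝ) : EReal) +
            sSup {y : EReal | ∃ q : Fin n → ℝ, (∀ i, 0 ≤ q i) ∧ (∑ i, q i = 1) ∧
              y = (((∑ i, q i * L i) - (lam + κ) * (∑ i, p i * f (q i / p i)) : ℝ) : EReal)}} := by
  classical
  set S : (Fin n → ℝ) → Prop := fun q => ∀ i, 0 ≤ q i with hS
  set T : (Fin n → ℝ) → Prop := fun q => ∑ i, q i = 1 with hT
  set D : (Fin n → ℝ) → ℝ := fun q => ∑ i, p i * f (q i / p i) with hD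
  set g : (Fin n → ℝ) → ℝ := fun q => (∑ i, q i * L i) - κ * D q with hg
  have hp0S : S p := fun i => (hp_pos i).le
  have hp0T : T p := hp_sum
  have hD0 : D p = 0 := by
    simp only [hD]
    rw [Finset.sum_eq_zero]
    intro i _
    rw [div_self (hp_pos i).ne', hf1, mul_zero]
  -- convexity of D along segments
  have hDconv : ∀ q1 q2 : Fin n → ℝ, ∀ a b : ℝ, 0 ≤ a → 0 ≤ b → a + b = 1 →
      D (fun i => a * q1 i + b * q2 i) ≤ a * D q1 + b * D q2 := by
    intro q1 q2 a b ha hb hab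
    simp only [hD]
    have hterm : ∀ i, p i * f ((a * q1 i + b * q2 i) / p i)
        ≤ a * (p i * f (q1 i / p i)) + b * (p i * f (q2 i / p i)) := by
      intro i
      have hdiv : (a * q1 i + b * q2 i) / p i = a * (q1 i / p i) + b * (q2 i / p i) := by
        field_simp
      have hcv := hf.2 (Set.mem_univ (q1 i / p i)) (Set.mem_univ (q2 i / p i)) ha hb hab
      simp only [smul_eq_mul] at hcv
      calc p i * f ((a * q1 i + b * q2 i) / p i)
          = p i * f (a * (q1 i / p i) + b * (q2 i / p i)) := by rw [hdiv]
        _ ≤ p i * (a * f (q1 i / p i) + b * f (q2 i / p i)) :=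
            mul_le_mul_of_nonneg_left hcv (hp_pos i).le
        _ = a * (p i * f (q1 i / p i)) + b * (p i * f (q2 i / p i)) := by ring
    calc ∑ i, p i * f ((a * q1 i + b * q2 i) / p i)
        ≤ ∑ i, (a * (p i * f (q1 i / p i)) + b * (p i * f (q2 i / p i))) :=
          Finset.sum_le_sum fun i _ => hterm i
      _ = a * (∑ i, p i * f (q1 i / p i)) + b * (∑ i, p i * f (q2 i / p i)) := by
          rw [Finset.sum_add_distrib, ← Finset.mul_sum, ← Finset.mul_sum]
  -- nonnegativity of D (Jensen)
  have hDnn : ∀ q : Fin n → ℝ, S q → T q → 0 ≤ D q := by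
    intro q hqS hqT
    have hsum : ∑ i, p i • (q i / p i) = 1 := by
      rw [← hqT]
      apply Finset.sum_congr rfl
      intro i _
      rw [smul_eq_mul, mul_div_cancel₀ _ (hp_pos i).ne']
    have := hf.map_sum_le (t := Finset.univ) (w := p) (p := fun i => q i / p i)
      (fun i _ => (hp_pos i).le) hp_sum (fun i _ => Set.mem_univ _)
    rw [hsum, hf1] at this
    simpa only [hD, smul_eq_mul] using this
  have hconv : ∀ q1, S q1 → T q1 → ∀ q2, S q2 → T q2 → ∀ a b : ℝ, 0 < a → 0 < b → a + b = 1 →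
      ∃ q, S q ∧ T q ∧ D q ≤ a * D q1 + b * D q2 ∧ a * g q1 + b * g q2 ≤ g q := by
    intro q1 hq1S hq1T q2 hq2S hq2T a b ha hb hab
    refine ⟨fun i => a * q1 i + b * q2 i, ?_, ?_, ?_, ?_⟩
    · intro i; have := hq1S i; have := hq2S i; positivity
    · simp only [hT] at *
      rw [Finset.sum_add_distrib, ← Finset.mul_sum, ← Finset.mul_sum, hq1T, hq2T]
      simpa using hab
    · exact hDconv q1 q2 a b ha.le hb.le hab
    · have hDle := hDconv q1 q2 a b ha.le hb.le hab
      have hlin : ∑ i, (a * q1 i + b * q2 i) * L i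
          = a * (∑ i, q1 i * L i) + b * (∑ i, q2 i * L i) := by
        rw [Finset.mul_sum, Finset.mul_sum, ← Finset.sum_add_distrib]
        apply Finset.sum_congr rfl
        intro i _; ring
      simp only [hg]
      rw [hlin]
      nlinarith
  have hB : ∀ q, S q → T q → g q ≤ ∑ i, |L i| := by
    intro q hqS hqT
    have h1 : ∑ i, q i * L i ≤ ∑ i, |L i| := by
      apply Finset.sum_le_sum
      intro i _
      have hqi1 : q i ≤ 1 := by
        rw [← hqT]
        exact Finset.single_le_sum (fun j _ => hqS j) (Finset.mem_univ i)
      calc q i * L i ≤ q i * |L i| := mul_le_mul_of_nonneg_left (le_abs_self _) (hqS i)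
        _ ≤ 1 * |L i| := mul_le_mul_of_nonneg_right hqi1 (abs_nonneg _)
        _ = |L i| := one_mul _
    have h2 := hDnn q hqS hqT
    simp only [hg]
    nlinarith
  have key := strong_dual_aux (S := S) (T := T) (D := D) (g := g) hp0S hp0T hD0 hconv hB hε
  have hsets : ∀ lam : ℝ,
      {y : EReal | ∃ q : Fin n → ℝ, (∀ i, 0 ≤ q i) ∧ (∑ i, q i = 1) ∧
        y = (((∑ i, q i * L i) - (lam + κ) * (∑ i, p i * f (q i / p i)) : ℝ) : EReal)} =
      {y : EReal | ∃ q, S q ∧ T q ∧ y = ((g q - lam * D q : ℝ) : EReal)} := by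
    intro lam
    ext y
    simp only [Set.mem_setOf_eq, hS, hT, hg, hD]
    constructor <;> rintro ⟨q, h1, h2, h3⟩ <;>
      exact ⟨q, h1, h2, by rw [h3]; norm_cast; ring⟩
  calc sSup {x : EReal | ∃ q : Fin n → ℝ, (∀ i, 0 ≤ q i) ∧ (∑ i, q i = 1) ∧
        (∑ i, p i * f (q i / p i)) ≤ ε ∧
        x = (((∑ i, q i * L i) - κ * (∑ i, p i * f (q i / p i)) : ℝ) : EReal)}
      = sSup {x : EReal | ∃ q, S q ∧ T q ∧ D q ≤ ε ∧ x = ((g q : ℝ) : EReal)} := rfl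
    _ = sInf {x : EReal | ∃ lam : ℝ, 0 ≤ lam ∧
        x = ((lam * ε : ℝ) : EReal) +
          sSup {y : EReal | ∃ q, S q ∧ T q ∧ y = ((g q - lam * D q : ℝ) : EReal)}} := key
    _ = _ := by
        congr 1
        ext x
        simp only [Set.mem_setOf_eq]
        constructor <;> rintro ⟨lam, hlam, rfl⟩ <;> exact ⟨lam, hlam, by rw [hsets lam]⟩
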